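/- Fix a real number β with 1 < β < 2. Then for every real number r with 0 < r < (β - 1)/β, it holds that (1 - e^{-2r})/(2r) > 1/(1 + βr). -/
import Mathlib


open Real

/-- For `1 < β < 2` and `0 < r < (β-1)/β`, `(1 - e^{-2r})/(2r) > 1/(1+βr)`. -/
theorem exp_ratio_sharp_lower_bound (β : ℝ) (hβ1 : 1 < β) (hβ2 : β < 2)
    (r : ℝ) (hr0 : 0 < r) (hr1 : r < (β - 1) / β) :
    (1 - Real.exp (-(2 * r))) / (2 * r) > 1 / (1 + β * r) := by
  have h2r : (0:ℝ) < 2 * r := by linarith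
  have hβ0 : (0:ℝ) < β := by linarith
  have hbr : β * r < β - 1 := by
    have h := (lt_div_iff₀ hβ0).mp hr1
    nlinarith
  have hb : (2 - β) * r < β - 1 := by nlinarith
  have hden : (0:ℝ) < 1 + β * r := by nlinarith
  have hq : 1 + r + r ^ 2 / 2 ≤ Real.exp r := Real.quadratic_le_exp_of_nonneg hr0.le
  have hsq : Real.exp (2 * r) = Real.exp r * Real.exp r := by
    rw [two_mul, Real.exp_add]
  have hexp : 1 + 2 * r + 2 * r ^ 2 < Real.exp (2 * r) := by
    rw [hsq]; nlinarith [hq, Real.exp_pos r, mul_pos hr0 hr0, mul_pos (mul_pos hr0 hr0) hr0, sq_nonneg (r^2)]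
  have hprod : Real.exp (-(2 * r)) * Real.exp (2 * r) = 1 := by
    rw [← Real.exp_add]; simp
  have hu : 0 < Real.exp (-(2 * r)) := Real.exp_pos _
  rw [gt_iff_lt, div_lt_div_iff₀ hden h2r]
  have key : Real.exp (-(2 * r)) * (1 + 2 * r + 2 * r ^ 2) < 1 := by
    calc Real.exp (-(2 * r)) * (1 + 2 * r + 2 * r ^ 2)
        < Real.exp (-(2 * r)) * Real.exp (2 * r) := by
          exact mul_lt_mul_of_pos_left hexp hu
      _ = 1 := hprod
  nlinarith [mul_pos hr0 hr0, mul_pos hu hr0, mul_pos (mul_pos hu hr0) hr0,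
    mul_pos (mul_pos hr0 hr0) hr0, sq_nonneg r]
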